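/- Let b ≥ 1 and τ ∈ {τ^b_0, τ^b_1}, or b ≥ 2 and τ ∈ {τ^b_2, τ^b_3}. Let U = U(A_0, …, A_n) be a union of TSs such that for every event e ∈ E_U there is a state s ∈ S_U at which e does not occur. Then U has the τ-ESSP if and only if the joining A(U) has the τ-ESSP, and U has the τ-SSP if and only if A(U) has the τ-SSP. -/

import Mathlib

/-! ## Transition systems -/

/-- A transition system over ambient state type `S` and event type `E`:
a set of states, a set of events, and a (deterministic or not) labeled
transition relation whose transitions stay inside the state/event sets. -/
structure TS (S E : Type) where
  states : Set S
  events : Set E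
  tr : S → E → S → Prop
  tr_mem : ∀ ⦃s e s'⦄, tr s e s' → s ∈ states ∧ e ∈ events ∧ s' ∈ states

/-- Event `e` occurs at state `s`. -/
def TS.occurs {S E : Type} (A : TS S E) (e : E) (s : S) : Prop := ∃ s', A.tr s e s'

/-! ## The types of nets `τ^b_t`, `t ∈ {0,1,2,3}` -/

/-- Events of the types of nets: pairs `(m,n)` or group events `c ∈ ℤ_{b+1}`. -/
inductive Tev where
  | pr (m n : ℕ)
  | gr (c : ℕ)
deriving DecidableEq

def Tev.minus : Tev → ℕ | .pr m _ => m | .gr _ => 0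
def Tev.plus : Tev → ℕ | .pr _ n => n | .gr _ => 0
def Tev.absv : Tev → ℕ | .pr _ _ => 0 | .gr c => c

/-- Membership in the event set of the type `τ^b_t`:
for `t ∈ {1,3}` (pure types) the pair events `(m,n)` with `m,n ≥ 1` are discarded;
for `t ∈ {2,3}` the pair `(0,0)` is discarded and the group events `0,…,b` are present;
for `t ∈ {0,1}` there are no group events. -/
def tevOk (b t : ℕ) : Tev → Prop
  | .pr m n => m ≤ b ∧ n ≤ b ∧ ((t = 1 ∨ t = 3) → (m = 0 ∨ n = 0)) ∧
      ((t = 2 ∨ t = 3) → ¬(m = 0 ∧ n = 0))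
  | .gr c => c ≤ b ∧ (t = 2 ∨ t = 3)

/-- The partial transition function of the types `τ^b_t` on the states `{0,…,b}`. -/
def tevStep (b s : ℕ) : Tev → Option ℕ
  | .pr m n => if m ≤ s ∧ s - m + n ≤ b then some (s - m + n) else none
  | .gr c => some ((s + c) % (b + 1))

/-! ## Regions, ESSP and SSP -/

/-- A `τ^b_t`-region of a transition system `A`. -/
structure Region (b t : ℕ) {S E : Type} (A : TS S E) where
  sup : S → ℕ
  sig : E → Tev
  sup_le : ∀ s ∈ A.states, sup s ≤ b
  sig_ok : ∀ e ∈ A.events, tevOk b t (sig e)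
  resp : ∀ ⦃s e s'⦄, A.tr s e s' → tevStep b (sup s) (sig e) = some (sup s')

/-- A region solves the ESSP atom `(e,s)` if `sig e` does not occur at `sup s` in `τ`. -/
def Region.solvesESSP {b t : ℕ} {S E : Type} {A : TS S E} (R : Region b t A)
    (e : E) (s : S) : Prop :=
  tevStep b (R.sup s) (R.sig e) = none

/-- A region solves the SSP atom `(s,s')` if `sup s ≠ sup s'`. -/
def Region.solvesSSP {b t : ℕ} {S E : Type} {A : TS S E} (R : Region b t A)
    (s s' : S) : Prop :=
  R.sup s ≠ R.sup s'

/-- `A` has the `τ^b_t`-ESSP: every ESSP atom is solvable. -/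
def TS.hasESSP (b t : ℕ) {S E : Type} (A : TS S E) : Prop :=
  ∀ e ∈ A.events, ∀ s ∈ A.states, ¬ A.occurs e s → ∃ R : Region b t A, R.solvesESSP e s

/-- `A` has the `τ^b_t`-SSP: every SSP atom is solvable. -/
def TS.hasSSP (b t : ℕ) {S E : Type} (A : TS S E) : Prop :=
  ∀ s ∈ A.states, ∀ s' ∈ A.states, s ≠ s' → ∃ R : Region b t A, R.solvesSSP s s'

/-- `A` is `τ^b_t`-feasible. -/
def TS.feasible (b t : ℕ) {S E : Type} (A : TS S E) : Prop :=
  A.hasESSP b t ∧ A.hasSSP b t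

/-! ## Combinators: linear TSs, relabeled states, unions -/

/-- The linear TS given by the word `w`: states `0,…,w.length`, and an
`e`-labeled transition from `s` to `s+1` whenever `w[s] = e`. -/
def TS.chain {E : Type} (w : List E) : TS ℕ E where
  states := {s | s ≤ w.length}
  events := {e | e ∈ w}
  tr s e s' := w[s]? = some e ∧ s' = s + 1
  tr_mem := by
    rintro s e s' ⟨h, rfl⟩
    have hs : s < w.length := by
      by_contra hc
      rw [List.getElem?_eq_none (Nat.le_of_not_lt hc)] at h
      cases h
    obtain ⟨hlt, rfl⟩ := List.getElem?_eq_some_iff.mp h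
    exact ⟨Nat.le_of_lt hs, List.getElem_mem hlt, hs⟩

/-- Renaming the states of a TS along `f`. -/
def TS.mapStates {S S' E : Type} (f : S → S') (A : TS S E) : TS S' E where
  states := f '' A.states
  events := A.events
  tr s e s' := ∃ a a', A.tr a e a' ∧ s = f a ∧ s' = f a'
  tr_mem := by
    rintro s e s' ⟨a, a', h, rfl, rfl⟩
    obtain ⟨h1, h2, h3⟩ := A.tr_mem h
    exact ⟨⟨a, h1, rfl⟩, h2, ⟨a', h3, rfl⟩⟩

/-- The union `U(A_i)_{i : ι}` of a family of TSs over the same ambient types. -/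
def TS.unionFam {ι S E : Type} (F : ι → TS S E) : TS S E where
  states := ⋃ i, (F i).states
  events := ⋃ i, (F i).events
  tr s e s' := ∃ i, (F i).tr s e s'
  tr_mem := by
    rintro s e s' ⟨i, h⟩
    obtain ⟨h1, h2, h3⟩ := (F i).tr_mem h
    exact ⟨Set.mem_iUnion.2 ⟨i, h1⟩, Set.mem_iUnion.2 ⟨i, h2⟩, Set.mem_iUnion.2 ⟨i, h3⟩⟩

/-- The SSP for a union: all SSP atoms given by distinct states of the *same*
constituent are solvable by regions of the union. -/
def unionSSP (b t : ℕ) {ι S E : Type} (F : ι → TS S E) : Prop :=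
  ∀ i : ι, ∀ s ∈ (F i).states, ∀ s' ∈ (F i).states, s ≠ s' →
    ∃ R : Region b t (TS.unionFam F), R.solvesSSP s s'
/-! ## Cubic monotone one-in-three 3-SAT -/

/-- An instance `φ = {C_0,…,C_{m-1}}` of cubic monotone one-in-three 3-SAT with
variables `V(φ) = {X_0,…,X_{m-1}}` (identified with `Fin m`): every clause
`C_i = {X_{i,0}, X_{i,1}, X_{i,2}}` consists of three distinct variables and every
variable occurs in exactly three clauses. -/
structure SatInstance (m : ℕ) where
  C : Fin m → Fin 3 → Fin m
  clause_distinct : ∀ i : Fin m, Function.Injective (C i)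
  cubic : ∀ v : Fin m,
    (Finset.univ.filter (fun p : Fin m × Fin 3 => C p.1 p.2 = v)).card = 3

/-- `M` is a one-in-three model of `φ`: every clause contains exactly one variable of `M`. -/
def SatInstance.model {m : ℕ} (φ : SatInstance m) (M : Set (Fin m)) : Prop :=
  ∀ i : Fin m, ∃! r : Fin 3, φ.C i r ∈ M

/-! ## Events of the gadgets -/

inductive Ev where
  | k | z | z0 | z1 | o0 | o1 | o2 | u
  | kj (j : ℕ)  -- the interface events k_j
  | x (i : ℕ)   -- the events x_i
  | p (i : ℕ)   -- the events p_i
  | vj (j : ℕ)  -- the events v_j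
  | X (v : ℕ)   -- the variable events X_v
deriving DecidableEq

/-! ## The gadget TSs (states are pairs (tag, position)) -/

/-- `H_0`, with `h_{0,i} = (0,i)`. -/
def H0 (b : ℕ) : TS (ℕ × ℕ) Ev :=
  (TS.chain (List.replicate b Ev.k ++ List.replicate b Ev.z ++ [Ev.o0] ++
    List.replicate b Ev.k ++ List.replicate b Ev.z ++ List.replicate b Ev.o1 ++
    List.replicate b Ev.k)).mapStates (fun i => (0, i))

/-- `H_1`, with `h_{1,i} = (0,i)`. -/
def H1 (b : ℕ) : TS (ℕ × ℕ) Ev :=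
  (TS.chain (List.replicate b Ev.k ++ [Ev.z0, Ev.o0] ++ List.replicate b Ev.k ++
    [Ev.z1, Ev.z0, Ev.o2] ++ List.replicate b Ev.k)).mapStates (fun i => (0, i))

/-- `H_2`, with `h_{2,i} = (0,i)`. -/
def H2 (b : ℕ) : TS (ℕ × ℕ) Ev :=
  (TS.chain (List.replicate b Ev.k ++ [Ev.o0] ++ List.replicate b Ev.k ++
    [Ev.o2] ++ List.replicate b Ev.k)).mapStates (fun i => (0, i))

/-- `D_{j,0}`, with `d_{j,0,i} = (j+1,i)`. -/
def D0 (b j : ℕ) : TS (ℕ × ℕ) Ev :=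
  (TS.chain ([Ev.o0, Ev.kj j] ++ List.replicate (b+1) Ev.o1)).mapStates
    (fun i => (j + 1, i))

/-- `D_{j,1}`, with `d_{j,1,i} = (j+1,i)`. -/
def D1 (b j : ℕ) : TS (ℕ × ℕ) Ev :=
  (TS.chain [Ev.o0, Ev.kj j, Ev.o2]).mapStates (fun i => (j + 1, i))

/-- The word of the gadget `T_{i,a}` (`a ∈ {0,1,2}`) of the translator `T`. -/
def Tword (b : ℕ) {m : ℕ} (φ : SatInstance m) (i : Fin m) (a : Fin 3) : List Ev :=
  if a = 0 then
    [Ev.kj (6 * (i : ℕ))] ++ List.replicate b (Ev.X ((φ.C i 0 : Fin m) : ℕ)) ++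
    [Ev.x (i : ℕ)] ++ List.replicate b (Ev.X ((φ.C i 2 : Fin m) : ℕ)) ++
    [Ev.kj (6 * (i : ℕ) + 1)]
  else if a = 1 then
    [Ev.kj (6 * (i : ℕ) + 2)] ++ List.replicate b (Ev.X ((φ.C i 1 : Fin m) : ℕ)) ++
    [Ev.p (i : ℕ), Ev.kj (6 * (i : ℕ) + 3)]
  else
    [Ev.kj (6 * (i : ℕ) + 4), Ev.x (i : ℕ), Ev.p (i : ℕ), Ev.kj (6 * (i : ℕ) + 5)]

/-- The gadget `T_{i,a}` of the translator `T`, with states `t_{i,a,pos} = (tag, pos)`. -/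
def Tgad (b tag : ℕ) {m : ℕ} (φ : SatInstance m) (i : Fin m) (a : Fin 3) :
    TS (ℕ × ℕ) Ev :=
  (TS.chain (Tword b φ i a)).mapStates (fun pos => (tag, pos))

/-- The translator `T = U(T_{0,0}, T_{0,1}, T_{0,2}, …, T_{m-1,2})` (standalone,
with `t_{i,a,pos} = (3i+a+1, pos)`). -/
def Ttrans (b : ℕ) {m : ℕ} (φ : SatInstance m) : TS (ℕ × ℕ) Ev :=
  TS.unionFam (fun q : Fin m × Fin 3 => Tgad b (3 * (q.1 : ℕ) + (q.2 : ℕ) + 1) φ q.1 q.2)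

/-- `H_3`, with `h_{3,0,i} = (0,i)` and `h_{3,1,i} = (1,i)`: the union of the path
`h_{3,0,0} --k^b--> h_{3,0,b}` and the path
`h_{3,0,0} --u--> h_{3,1,0} --k^{b-1}--> h_{3,1,b-1} --z--> h_{3,0,b}`. -/
def H3 (b : ℕ) : TS (ℕ × ℕ) Ev :=
  TS.unionFam (fun c : Bool =>
    if c then (TS.chain (List.replicate b Ev.k)).mapStates (fun i => (0, i))
    else (TS.chain ([Ev.u] ++ List.replicate (b-1) Ev.k ++ [Ev.z])).mapStates
      (fun i => if i = 0 then (0, 0) else if i = b + 1 then (0, b) else (1, i - 1)))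

/-- The set `E_0 = {(m,m) : 1 ≤ m ≤ b} ∪ {0}`. -/
def Ezero (b : ℕ) : Set Tev :=
  {e | (∃ q, 1 ≤ q ∧ q ≤ b ∧ e = Tev.pr q q) ∨ e = Tev.gr 0}

/-- The first row `f_{j,0,0} --k^b--> f_{j,0,b}` of `F_j`, with `f_{j,0,i} = (4j+2, i)`. -/
def Fch0 (b j : ℕ) : TS (ℕ × ℕ) Ev :=
  (TS.chain (List.replicate b Ev.k)).mapStates (fun i => (4 * j + 2, i))

/-- The second row `f_{j,0,0} --v_j--> f_{j,1,0} --k^{b-1}--> f_{j,1,b-1} --X_j--> f_{j,0,b}`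
of `F_j`, with `f_{j,1,i} = (4j+3, i)`. -/
def Fch1 (b j : ℕ) : TS (ℕ × ℕ) Ev :=
  (TS.chain ([Ev.vj j] ++ List.replicate (b-1) Ev.k ++ [Ev.X j])).mapStates
    (fun i => if i = 0 then (4 * j + 2, 0) else if i = b + 1 then (4 * j + 2, b)
      else (4 * j + 3, i - 1))

/-- `F_j` as the union of its two rows. -/
def Fgad (b j : ℕ) : TS (ℕ × ℕ) Ev :=
  TS.unionFam (fun c : Bool => if c then Fch0 b j else Fch1 b j)

/-- `G_j`, with `g_{j,i} = (4j+4, i)`. -/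
def Ggad (b j : ℕ) : TS (ℕ × ℕ) Ev :=
  (TS.chain (List.replicate b Ev.k ++ [Ev.X j])).mapStates (fun i => (4 * j + 4, i))

/-- The clause gadget `T_i` (of the translator for the group-extended types),
with `t_{i,pos} = (4i+5, pos)`. -/
def Tgad2 (b : ℕ) {m : ℕ} (φ : SatInstance m) (i : Fin m) : TS (ℕ × ℕ) Ev :=
  (TS.chain (List.replicate b Ev.k ++
    [Ev.X ((φ.C i 0 : Fin m) : ℕ), Ev.X ((φ.C i 1 : Fin m) : ℕ),
     Ev.X ((φ.C i 2 : Fin m) : ℕ), Ev.z] ++ List.replicate b Ev.k)).mapStates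
    (fun pos => (4 * (i : ℕ) + 5, pos))

/-- The translator `T_τ = U(F_0, G_0, …, F_{m-1}, G_{m-1}, T_0, …, T_{m-1})`
for the group-extended types. -/
def Ttrans2fam (b : ℕ) {m : ℕ} (φ : SatInstance m) : Fin m × Fin 3 → TS (ℕ × ℕ) Ev :=
  fun q => if q.2 = 0 then Fgad b (q.1 : ℕ)
    else if q.2 = 1 then Ggad b (q.1 : ℕ) else Tgad2 b φ q.1

def Ttrans2 (b : ℕ) {m : ℕ} (φ : SatInstance m) : TS (ℕ × ℕ) Ev :=
  TS.unionFam (Ttrans2fam b φ)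
/-! ## The key unions and the unions of key and translator -/

/-- The family of constituents of the key `K_{τ^b_0} = U(H_0, D_{0,0},…,D_{6m-1,0})`. -/
def K0fam (b m : ℕ) : Option (Fin (6 * m)) → TS (ℕ × ℕ) Ev
  | none => H0 b
  | some j => D0 b (j : ℕ)

def K0 (b m : ℕ) : TS (ℕ × ℕ) Ev := TS.unionFam (K0fam b m)

/-- The family of constituents of the key `K_{τ^b_1} = U(H_1, D_{0,1},…,D_{6m-1,1})`. -/
def K1fam (b m : ℕ) : Option (Fin (6 * m)) → TS (ℕ × ℕ) Ev
  | none => H1 b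
  | some j => D1 b (j : ℕ)

def K1 (b m : ℕ) : TS (ℕ × ℕ) Ev := TS.unionFam (K1fam b m)

/-- The family of constituents of the key `K = U(H_2, D_{0,1},…,D_{6m-1,1})`. -/
def K2fam (b m : ℕ) : Option (Fin (6 * m)) → TS (ℕ × ℕ) Ev
  | none => H2 b
  | some j => D1 b (j : ℕ)

def K2 (b m : ℕ) : TS (ℕ × ℕ) Ev := TS.unionFam (K2fam b m)

/-- The family of constituents of `U_{τ^b_0} = U(H_0, D_{0,0},…,D_{6m-1,0}, T)`. -/
def U0fam (b : ℕ) {m : ℕ} (φ : SatInstance m) :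
    Option (Fin (6 * m) ⊕ Fin m × Fin 3) → TS (ℕ × ℕ) Ev
  | none => H0 b
  | some (.inl j) => D0 b (j : ℕ)
  | some (.inr q) => Tgad b (6 * m + 1 + 3 * (q.1 : ℕ) + (q.2 : ℕ)) φ q.1 q.2

def U0 (b : ℕ) {m : ℕ} (φ : SatInstance m) : TS (ℕ × ℕ) Ev := TS.unionFam (U0fam b φ)

/-- The family of constituents of `U_{τ^b_1} = U(H_1, D_{0,1},…,D_{6m-1,1}, T)`. -/
def U1fam (b : ℕ) {m : ℕ} (φ : SatInstance m) :
    Option (Fin (6 * m) ⊕ Fin m × Fin 3) → TS (ℕ × ℕ) Ev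
  | none => H1 b
  | some (.inl j) => D1 b (j : ℕ)
  | some (.inr q) => Tgad b (6 * m + 1 + 3 * (q.1 : ℕ) + (q.2 : ℕ)) φ q.1 q.2

def U1 (b : ℕ) {m : ℕ} (φ : SatInstance m) : TS (ℕ × ℕ) Ev := TS.unionFam (U1fam b φ)

/-- The family of constituents of `W = U(H_2, D_{0,1},…,D_{6m-1,1}, T)`. -/
def Wfam (b : ℕ) {m : ℕ} (φ : SatInstance m) :
    Option (Fin (6 * m) ⊕ Fin m × Fin 3) → TS (ℕ × ℕ) Ev
  | none => H2 b
  | some (.inl j) => D1 b (j : ℕ)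
  | some (.inr q) => Tgad b (6 * m + 1 + 3 * (q.1 : ℕ) + (q.2 : ℕ)) φ q.1 q.2

def Wun (b : ℕ) {m : ℕ} (φ : SatInstance m) : TS (ℕ × ℕ) Ev := TS.unionFam (Wfam b φ)

/-- The family of constituents of
`U_τ = U(H_3, F_0, G_0, …, F_{m-1}, G_{m-1}, T_0, …, T_{m-1})` for `τ ∈ {τ^b_2, τ^b_3}`. -/
def U2fam (b : ℕ) {m : ℕ} (φ : SatInstance m) :
    Option (Fin m × Fin 3) → TS (ℕ × ℕ) Ev
  | none => H3 b
  | some q => Ttrans2fam b φ q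

def U2 (b : ℕ) {m : ℕ} (φ : SatInstance m) : TS (ℕ × ℕ) Ev := TS.unionFam (U2fam b φ)

/-! ## The joining `A(U)` -/

/-- The joining `A(U)` of a union `U = U(A_0,…,A_n)` of initialized TSs (`A_i`
initialized at `s0 i`): fresh connector states `q_i = Sum.inr i`, fresh events
`w_{i+1} = Sum.inr (Sum.inl i)` (`i : Fin n`) and `y_i = Sum.inr (Sum.inr i)`,
and transitions `q_i --w_{i+1}--> q_{i+1}` and `q_i --y_i--> s0 i`. -/
def joining {S E : Type} {n : ℕ} (F : Fin (n + 1) → TS S E) (s0 : Fin (n + 1) → S)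
    (h0 : ∀ i, s0 i ∈ (F i).states) :
    TS (S ⊕ Fin (n + 1)) (E ⊕ (Fin n ⊕ Fin (n + 1))) where
  states := {st | (∃ a ∈ (TS.unionFam F).states, st = Sum.inl a) ∨ ∃ q, st = Sum.inr q}
  events := {ev | (∃ e ∈ (TS.unionFam F).events, ev = Sum.inl e) ∨ ∃ c, ev = Sum.inr c}
  tr st ev st' :=
    (∃ a e a', (TS.unionFam F).tr a e a' ∧
        st = Sum.inl a ∧ ev = Sum.inl e ∧ st' = Sum.inl a') ∨
    (∃ i : Fin n, st = Sum.inr i.castSucc ∧ ev = Sum.inr (Sum.inl i) ∧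
        st' = Sum.inr i.succ) ∨
    (∃ i : Fin (n + 1), st = Sum.inr i ∧ ev = Sum.inr (Sum.inr i) ∧
        st' = Sum.inl (s0 i))
  tr_mem := by
    rintro st ev st' (⟨a, e, a', h, rfl, rfl, rfl⟩ | ⟨i, rfl, rfl, rfl⟩ | ⟨i, rfl, rfl, rfl⟩)
    · obtain ⟨h1, h2, h3⟩ := (TS.unionFam F).tr_mem h
      exact ⟨Or.inl ⟨a, h1, rfl⟩, Or.inl ⟨e, h2, rfl⟩, Or.inl ⟨a', h3, rfl⟩⟩
    · exact ⟨Or.inr ⟨_, rfl⟩, Or.inr ⟨_, rfl⟩, Or.inr ⟨_, rfl⟩⟩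
    · exact ⟨Or.inr ⟨_, rfl⟩, Or.inr ⟨_, rfl⟩,
        Or.inl ⟨_, Set.mem_iUnion.2 ⟨i, h0 i⟩, rfl⟩⟩

/-! ## Auxiliary material for Statement 2 -/

/-- The neutral (loop) event of `τ^b_t`. -/
def eps (t : ℕ) : Tev := if t ≤ 1 then .pr 0 0 else .gr 0

/-- An event of `τ^b_t` leading from state `w0` to state `tgt`. -/
def yevt (b t w0 tgt : ℕ) : Tev :=
  if t ≤ 1 then (if w0 ≤ tgt then .pr 0 (tgt - w0) else .pr (w0 - tgt) 0)
  else .gr ((tgt + (b + 1) - w0) % (b + 1))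

lemma eps_ok {b t : ℕ} (ht : ¬ t ≤ 1 → t = 2 ∨ t = 3) : tevOk b t (eps t) := by
  unfold eps; split
  · next h1 => exact ⟨Nat.zero_le _, Nat.zero_le _, fun _ => Or.inl rfl, fun h2 => by omega⟩
  · next h1 => exact ⟨Nat.zero_le _, ht h1⟩

lemma eps_step {b t s : ℕ} (hs : s ≤ b) : tevStep b s (eps t) = some s := by
  unfold eps; split
  · simp only [tevStep]
    rw [if_pos ⟨Nat.zero_le _, by omega⟩]
    exact congrArg some (by omega)
  · simp only [tevStep]
    rw [Nat.add_zero, Nat.mod_eq_of_lt (by omega)]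

lemma step_pr {b s m n : ℕ} (h1 : m ≤ s) (h2 : s - m + n ≤ b) :
    tevStep b s (.pr m n) = some (s - m + n) := by
  simp only [tevStep]; rw [if_pos ⟨h1, h2⟩]

lemma step_pr_none {b s m n : ℕ} (h : ¬(m ≤ s ∧ s - m + n ≤ b)) :
    tevStep b s (.pr m n) = none := by
  simp only [tevStep]; rw [if_neg h]

lemma ok_pr {b t m n : ℕ} (hm : m ≤ b) (hn : n ≤ b) (hp : m = 0 ∨ n = 0)
    (hz : ¬(m = 0 ∧ n = 0)) : tevOk b t (.pr m n) :=
  ⟨hm, hn, fun _ => hp, fun _ => hz⟩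

lemma yevt_ok {b t w0 tgt : ℕ} (ht : ¬ t ≤ 1 → t = 2 ∨ t = 3)
    (hw : w0 ≤ b) (htgt : tgt ≤ b) : tevOk b t (yevt b t w0 tgt) := by
  unfold yevt; split
  · next h1 =>
    split
    · exact ⟨Nat.zero_le _, by omega, fun _ => Or.inl rfl, fun h2 => by omega⟩
    · exact ⟨by omega, Nat.zero_le _, fun _ => Or.inr rfl, fun h2 => by omega⟩
  · next h1 =>
    exact ⟨Nat.lt_succ_iff.mp (Nat.mod_lt _ (Nat.succ_pos b)), ht h1⟩

lemma yevt_step {b t w0 tgt : ℕ} (hw : w0 ≤ b) (htgt : tgt ≤ b) :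
    tevStep b w0 (yevt b t w0 tgt) = some tgt := by
  unfold yevt; split
  · split
    · rw [step_pr (Nat.zero_le _) (by omega)]; congr 1; omega
    · rw [step_pr (by omega) (by omega)]; congr 1; omega
  · simp only [tevStep]
    congr 1
    have h1 : w0 + (tgt + (b + 1) - w0) = tgt + (b + 1) := by omega
    rw [Nat.add_mod_mod, h1, Nat.add_mod_right, Nat.mod_eq_of_lt (by omega)]

section Regions

variable {S E : Type} {n : ℕ} {F : Fin (n + 1) → TS S E} {s0 : Fin (n + 1) → S}
  {h0 : ∀ i, s0 i ∈ (F i).states}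

lemma mem_joining_states_inl {a : S} (ha : a ∈ (TS.unionFam F).states) :
    Sum.inl a ∈ (joining F s0 h0).states := Or.inl ⟨a, ha, rfl⟩

lemma mem_joining_states_inr (q : Fin (n + 1)) :
    (Sum.inr q : S ⊕ Fin (n + 1)) ∈ (joining F s0 h0).states := Or.inr ⟨q, rfl⟩

lemma mem_joining_events_inl {e : E} (he : e ∈ (TS.unionFam F).events) :
    (Sum.inl e : E ⊕ (Fin n ⊕ Fin (n + 1))) ∈ (joining F s0 h0).events := Or.inl ⟨e, he, rfl⟩

/-- Restriction of a region of the joining to a region of the union. -/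
def restrictReg {b t : ℕ} (R : Region b t (joining F s0 h0)) :
    Region b t (TS.unionFam F) where
  sup a := R.sup (Sum.inl a)
  sig e := R.sig (Sum.inl e)
  sup_le a ha := R.sup_le _ (mem_joining_states_inl ha)
  sig_ok e he := R.sig_ok _ (mem_joining_events_inl he)
  resp := fun s e s' h => R.resp (Or.inl ⟨s, e, s', h, rfl, rfl, rfl⟩)

/-- Extension of a region of the union to a region of the joining, putting all
connector states at level `w0`. -/
def extendReg (b t : ℕ) (hb : 1 ≤ b) (ht : ¬ t ≤ 1 → t = 2 ∨ t = 3)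
    (R : Region b t (TS.unionFam F)) (w0 : ℕ) (hw0 : w0 ≤ b) :
    Region b t (joining F s0 h0) where
  sup := Sum.elim R.sup fun _ => w0
  sig := Sum.elim R.sig (Sum.elim (fun _ => eps t) (fun j => yevt b t w0 (R.sup (s0 j))))
  sup_le := by
    rintro (a | q) hmem
    · rcases hmem with ⟨a', ha', heq⟩ | ⟨q, heq⟩
      · cases heq; exact R.sup_le _ ha'
      · exact absurd heq (Sum.inl_ne_inr)
    · exact hw0
  sig_ok := by
    rintro (e | (j | j)) hmem
    · rcases hmem with ⟨e', he', heq⟩ | ⟨c, heq⟩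
      · cases heq; exact R.sig_ok _ he'
      · exact absurd heq (Sum.inl_ne_inr)
    · exact eps_ok ht
    · exact yevt_ok ht hw0 (R.sup_le _ (Set.mem_iUnion.2 ⟨j, h0 j⟩))
  resp := by
    rintro st ev st'
      (⟨a, e, a', h, rfl, rfl, rfl⟩ | ⟨i, rfl, rfl, rfl⟩ | ⟨i, rfl, rfl, rfl⟩) <;>
      simp only [Sum.elim_inl, Sum.elim_inr]
    · exact R.resp h
    · exact eps_step hw0
    · exact yevt_step hw0 (R.sup_le _ (Set.mem_iUnion.2 ⟨i, h0 i⟩))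

/-- The indicator region of a single connector state `q_k`. -/
def indReg (b t : ℕ) (hb : 1 ≤ b) (ht : ¬ t ≤ 1 → t = 2 ∨ t = 3) (k : Fin (n + 1)) :
    Region b t (joining F s0 h0) where
  sup := Sum.elim (fun _ => 0) (fun q => if q = k then 1 else 0)
  sig := Sum.elim (fun _ => eps t)
    (Sum.elim
      (fun j => if j.castSucc = k then Tev.pr 1 0 else if j.succ = k then Tev.pr 0 1 else eps t)
      (fun j => if j = k then Tev.pr 1 0 else eps t))
  sup_le := by
    rintro (a | q) _
    · exact Nat.zero_le _
    · dsimp only [Sum.elim_inr]; split <;> omega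
  sig_ok := by
    rintro (e | (j | j)) _
    · exact eps_ok ht
    · dsimp only [Sum.elim_inr, Sum.elim_inl]
      split
      · exact ok_pr hb (Nat.zero_le _) (Or.inr rfl) (by omega)
      · split
        · exact ok_pr (Nat.zero_le _) hb (Or.inl rfl) (by omega)
        · exact eps_ok ht
    · dsimp only [Sum.elim_inr]
      split
      · exact ok_pr hb (Nat.zero_le _) (Or.inr rfl) (by omega)
      · exact eps_ok ht
  resp := by
    rintro st ev st'
      (⟨a, e, a', h, rfl, rfl, rfl⟩ | ⟨i, rfl, rfl, rfl⟩ | ⟨i, rfl, rfl, rfl⟩) <;>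
      simp only [Sum.elim_inl, Sum.elim_inr]
    · exact eps_step (Nat.zero_le _)
    · have hne : i.castSucc ≠ i.succ := (Fin.castSucc_lt_succ : i.castSucc < i.succ).ne
      by_cases h1 : i.castSucc = k
      · rw [if_pos h1, if_pos h1, if_neg (fun h2 => hne (h1.trans h2.symm))]
        rw [step_pr (le_refl 1) (by omega)]
      · rw [if_neg h1, if_neg h1]
        by_cases h2 : i.succ = k
        · rw [if_pos h2, if_pos h2, step_pr (Nat.zero_le _) (by omega)]
        · rw [if_neg h2, if_neg h2]; exact eps_step (Nat.zero_le _)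
    · by_cases h1 : i = k
      · rw [if_pos h1, if_pos h1, step_pr (le_refl 1) (by omega)]
      · rw [if_neg h1, if_neg h1]; exact eps_step (Nat.zero_le _)

open Classical in
/-- The indicator region of the states of the constituent `F i0`. -/
noncomputable def constReg (b t : ℕ) (hb : 1 ≤ b) (ht : ¬ t ≤ 1 → t = 2 ∨ t = 3)
    (hdisj : ∀ i j, i ≠ j → Disjoint (F i).states (F j).states) (i0 : Fin (n + 1)) :
    Region b t (joining F s0 h0) where
  sup := Sum.elim (fun a => if a ∈ (F i0).states then 1 else 0) (fun _ => 0)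
  sig := Sum.elim (fun _ => eps t)
    (Sum.elim (fun _ => eps t) (fun j => if j = i0 then Tev.pr 0 1 else eps t))
  sup_le := by
    rintro (a | q) _
    · dsimp only [Sum.elim_inl]; split <;> omega
    · exact Nat.zero_le _
  sig_ok := by
    rintro (e | (j | j)) _
    · exact eps_ok ht
    · exact eps_ok ht
    · dsimp only [Sum.elim_inr]
      split
      · exact ok_pr (Nat.zero_le _) hb (Or.inl rfl) (by omega)
      · exact eps_ok ht
  resp := by
    rintro st ev st'
      (⟨a, e, a', ⟨i, hi⟩, rfl, rfl, rfl⟩ | ⟨i, rfl, rfl, rfl⟩ | ⟨i, rfl, rfl, rfl⟩) <;>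
      simp only [Sum.elim_inl, Sum.elim_inr]
    · obtain ⟨hm1, _, hm3⟩ := (F i).tr_mem hi
      by_cases hii : i = i0
      · subst hii
        rw [if_pos hm1, if_pos hm3]
        exact eps_step hb
      · have d := hdisj i i0 hii
        rw [if_neg (Set.disjoint_left.mp d hm1), if_neg (Set.disjoint_left.mp d hm3)]
        exact eps_step (Nat.zero_le _)
    · exact eps_step (Nat.zero_le _)
    · by_cases h1 : i = i0
      · subst h1
        rw [if_pos rfl, if_pos (h0 i)]
        rw [step_pr (Nat.zero_le _) (by omega)]
      · rw [if_neg h1, if_neg (Set.disjoint_left.mp (hdisj i i0 h1) (h0 i))]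
        exact eps_step (Nat.zero_le _)

lemma indReg_sup_inl {b t : ℕ} (hb : 1 ≤ b) (ht : ¬ t ≤ 1 → t = 2 ∨ t = 3)
    (k : Fin (n + 1)) (a : S) :
    (indReg (F := F) (s0 := s0) (h0 := h0) b t hb ht k).sup (Sum.inl a) = 0 := rfl

lemma indReg_sup_inr {b t : ℕ} (hb : 1 ≤ b) (ht : ¬ t ≤ 1 → t = 2 ∨ t = 3)
    (k q : Fin (n + 1)) :
    (indReg (F := F) (s0 := s0) (h0 := h0) b t hb ht k).sup (Sum.inr q)
      = if q = k then 1 else 0 := rfl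

lemma indReg_sig_w {b t : ℕ} (hb : 1 ≤ b) (ht : ¬ t ≤ 1 → t = 2 ∨ t = 3)
    (k : Fin (n + 1)) (j : Fin n) :
    (indReg (F := F) (s0 := s0) (h0 := h0) b t hb ht k).sig (Sum.inr (Sum.inl j))
      = if j.castSucc = k then Tev.pr 1 0 else if j.succ = k then Tev.pr 0 1 else eps t := rfl

lemma indReg_sig_y {b t : ℕ} (hb : 1 ≤ b) (ht : ¬ t ≤ 1 → t = 2 ∨ t = 3)
    (k j : Fin (n + 1)) :
    (indReg (F := F) (s0 := s0) (h0 := h0) b t hb ht k).sig (Sum.inr (Sum.inr j))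
      = if j = k then Tev.pr 1 0 else eps t := rfl

open Classical in
lemma constReg_sup_inl {b t : ℕ} (hb : 1 ≤ b) (ht : ¬ t ≤ 1 → t = 2 ∨ t = 3)
    (hdisj : ∀ i j, i ≠ j → Disjoint (F i).states (F j).states) (i0 : Fin (n + 1)) (a : S) :
    (constReg (F := F) (s0 := s0) (h0 := h0) b t hb ht hdisj i0).sup (Sum.inl a)
      = if a ∈ (F i0).states then 1 else 0 := rfl

end Regions

/-- Lemma 2 of the paper: if `U = U(A_0,…,A_n)` is a union of TSs
(with pairwise disjoint state sets) such that every event of `U` does not occur at some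
state of `U`, then `U` has the `τ`-ESSP (resp. `τ`-SSP) iff the joining `A(U)` has the
`τ`-ESSP (resp. `τ`-SSP), for every `τ ∈ {τ^b_0, τ^b_1, τ^b_2, τ^b_3}`. -/
theorem stmt2 {S E : Type} (b t : ℕ)
    (hbt : ((t = 0 ∨ t = 1) ∧ 1 ≤ b) ∨ ((t = 2 ∨ t = 3) ∧ 2 ≤ b))
    (n : ℕ) (F : Fin (n + 1) → TS S E)
    (hdisj : ∀ i j, i ≠ j → Disjoint (F i).states (F j).states)
    (s0 : Fin (n + 1) → S) (h0 : ∀ i, s0 i ∈ (F i).states)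
    (hmiss : ∀ e ∈ (TS.unionFam F).events, ∃ s ∈ (TS.unionFam F).states,
      ¬ (TS.unionFam F).occurs e s) :
    ((TS.unionFam F).hasESSP b t ↔ (joining F s0 h0).hasESSP b t) ∧
    (unionSSP b t F ↔ (joining F s0 h0).hasSSP b t) := by
  have hb : 1 ≤ b := by rcases hbt with ⟨_, h⟩ | ⟨_, h⟩ <;> omega
  have ht : ¬ t ≤ 1 → t = 2 ∨ t = 3 := by
    intro h2; rcases hbt with ⟨h, _⟩ | ⟨h, _⟩ <;> omega
  constructor
  · constructor
    · -- ESSP of the union implies ESSP of the joining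
      intro hU ev hev st hst hnocc
      obtain e | j | i := ev
      · -- an event of the union
        have he : e ∈ (TS.unionFam F).events := by
          rcases hev with ⟨e', he', heq⟩ | ⟨c, heq⟩
          · cases Sum.inl.inj heq; exact he'
          · exact absurd heq Sum.inl_ne_inr
        obtain s | q := st
        · -- at a state of the union
          have hs : s ∈ (TS.unionFam F).states := by
            rcases hst with ⟨a', ha', heq⟩ | ⟨q, heq⟩
            · cases Sum.inl.inj heq; exact ha'
            · exact absurd heq Sum.inl_ne_inr
          have hno : ¬ (TS.unionFam F).occurs e s := by
            rintro ⟨s', h⟩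
            exact hnocc ⟨Sum.inl s', Or.inl ⟨s, e, s', h, rfl, rfl, rfl⟩⟩
          obtain ⟨R, hR⟩ := hU e he s hs hno
          exact ⟨extendReg b t hb ht R 0 (Nat.zero_le _), hR⟩
        · -- at a connector state
          obtain ⟨sm, hsm, hno⟩ := hmiss e he
          obtain ⟨R, hR⟩ := hU e he sm hsm hno
          exact ⟨extendReg b t hb ht R (R.sup sm) (R.sup_le _ hsm), hR⟩
      · -- an event w_j
        refine ⟨indReg b t hb ht j.castSucc, ?_⟩
        have hstne : st ≠ Sum.inr j.castSucc := by
          rintro rfl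
          exact hnocc ⟨Sum.inr j.succ, Or.inr (Or.inl ⟨j, rfl, rfl, rfl⟩)⟩
        have hsup : (indReg (F := F) (s0 := s0) (h0 := h0) b t hb ht j.castSucc).sup st
            = 0 := by
          obtain a | q := st
          · exact indReg_sup_inl hb ht _ a
          · rw [indReg_sup_inr, if_neg (fun h => hstne (by rw [h]))]
        show tevStep b _ _ = none
        rw [hsup, indReg_sig_w, if_pos rfl]
        exact step_pr_none (by omega)
      · -- an event y_i
        refine ⟨indReg b t hb ht i, ?_⟩
        have hstne : st ≠ Sum.inr i := by
          rintro rfl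
          exact hnocc ⟨Sum.inl (s0 i), Or.inr (Or.inr ⟨i, rfl, rfl, rfl⟩)⟩
        have hsup : (indReg (F := F) (s0 := s0) (h0 := h0) b t hb ht i).sup st = 0 := by
          obtain a | q := st
          · exact indReg_sup_inl hb ht _ a
          · rw [indReg_sup_inr, if_neg (fun h => hstne (by rw [h]))]
        show tevStep b _ _ = none
        rw [hsup, indReg_sig_y, if_pos rfl]
        exact step_pr_none (by omega)
    · -- ESSP of the joining implies ESSP of the union
      intro hJ e he s hs hno
      have hnoJ : ¬ (joining F s0 h0).occurs (Sum.inl e) (Sum.inl s) := by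
        rintro ⟨st', (⟨a, e', a', h, ha, heqe, rfl⟩ | ⟨i, h1, h2, _⟩ | ⟨i, h1, h2, _⟩)⟩
        · cases Sum.inl.inj ha; cases Sum.inl.inj heqe
          exact hno ⟨a', h⟩
        · exact absurd h2 Sum.inl_ne_inr
        · exact absurd h2 Sum.inl_ne_inr
      obtain ⟨R, hR⟩ := hJ _ (mem_joining_events_inl he) _ (mem_joining_states_inl hs) hnoJ
      exact ⟨restrictReg R, hR⟩
  · constructor
    · -- SSP of the union implies SSP of the joining
      intro hS st hst st' hst' hne
      obtain s | q := st <;> obtain s' | q' := st'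
      · -- two states of the union
        have hs : s ∈ (TS.unionFam F).states := by
          rcases hst with ⟨a', ha', heq⟩ | ⟨q, heq⟩
          · cases Sum.inl.inj heq; exact ha'
          · exact absurd heq Sum.inl_ne_inr
        obtain ⟨i, hsi⟩ := Set.mem_iUnion.1 hs
        have hne' : s ≠ s' := fun h => hne (by rw [h])
        by_cases hmem : s' ∈ (F i).states
        · obtain ⟨R, hR⟩ := hS i s hsi s' hmem hne'
          exact ⟨extendReg b t hb ht R 0 (Nat.zero_le _), hR⟩
        · refine ⟨constReg b t hb ht hdisj i, ?_⟩
          show _ ≠ _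
          rw [constReg_sup_inl, constReg_sup_inl, if_pos hsi, if_neg hmem]
          omega
      · refine ⟨indReg b t hb ht q', ?_⟩
        show _ ≠ _
        rw [indReg_sup_inl, indReg_sup_inr, if_pos rfl]
        omega
      · refine ⟨indReg b t hb ht q, ?_⟩
        show _ ≠ _
        rw [indReg_sup_inl, indReg_sup_inr, if_pos rfl]
        omega
      · have hq : q ≠ q' := fun h => hne (by rw [h])
        refine ⟨indReg b t hb ht q, ?_⟩
        show _ ≠ _
        rw [indReg_sup_inr, indReg_sup_inr, if_pos rfl, if_neg (Ne.symm hq)]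
        omega
    · -- SSP of the joining implies SSP of the union
      intro hJ i s hs s' hs' hne
      have hne' : (Sum.inl s : S ⊕ Fin (n + 1)) ≠ Sum.inl s' := fun h => hne (Sum.inl.inj h)
      obtain ⟨R, hR⟩ := hJ _ (mem_joining_states_inl (Set.mem_iUnion.2 ⟨i, hs⟩))
        _ (mem_joining_states_inl (Set.mem_iUnion.2 ⟨i, hs'⟩)) hne'
      exact ⟨restrictReg R, hR⟩
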